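/- Let a < b be real numbers and let f ∈ C²([a,b]×[a,b]). Then for every x ∈ [a,b) all the Hadamard finite part integrals below exist, and the function x ↦ p.f.∫_x^b f(x,t)/(t−x) dt is differentiable on [a,b) with d/dx ( p.f.∫_x^b f(x,t)/(t−x) dt ) = p.f.∫_x^b f(x,t)/(t−x)² dt + p.f.∫_x^b (∂f/∂x)(x,t)/(t−x) dt − (∂f/∂t)(x,x). -/

import Mathlib

open MeasureTheory Filter Set
open scoped Topology

noncomputable section

/-- Hadamard finite part of order 1 with upper limit `b`:
`p.f.∫_x^b g(t)/(t−x) dt = L` means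
`lim_{ε→0⁺} ( ∫_{x+ε}^b g(t)/(t−x) dt + g(x)·log ε ) = L`. -/
def HasPF1Upper (g : ℝ → ℝ) (x b L : ℝ) : Prop :=
  Tendsto (fun ε : ℝ => (∫ t in (x + ε)..b, g t / (t - x)) + g x * Real.log ε)
    (𝓝[>] (0 : ℝ)) (𝓝 L)

/-- Hadamard finite part of order 2 with upper limit `b`, where `d` is the right
derivative `g'(x⁺)`: `p.f.∫_x^b g(t)/(t−x)² dt = L` means
`lim_{ε→0⁺} ( ∫_{x+ε}^b g(t)/(t−x)² dt + d·log ε − g(x)/ε ) = L`. -/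
def HasPF2Upper (g : ℝ → ℝ) (d x b L : ℝ) : Prop :=
  Tendsto (fun ε : ℝ => (∫ t in (x + ε)..b, g t / (t - x) ^ 2) + d * Real.log ε - g x / ε)
    (𝓝[>] (0 : ℝ)) (𝓝 L)

open intervalIntegral

/-- Interval integrability of a function bounded on `Ioc x b` and continuous there. -/
lemma intInt_of_bdd {G' : ℝ → ℝ} {x b C : ℝ} (hxb : x ≤ b)
    (hc : ContinuousOn G' (Set.Ioc x b))
    (hbd : ∀ t ∈ Set.Ioc x b, |G' t| ≤ C) :
    IntervalIntegrable G' volume x b := by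
  rw [intervalIntegrable_iff_integrableOn_Ioc_of_le hxb]
  refine Integrable.mono' (integrable_const C)
    (hc.aestronglyMeasurable measurableSet_Ioc) ?_
  rw [ae_restrict_iff' measurableSet_Ioc]
  filter_upwards with t ht
  simpa [Real.norm_eq_abs] using hbd t ht

/-- The tail integral converges as ε → 0⁺. -/
lemma tendsto_tail {G' : ℝ → ℝ} {x b C : ℝ} (hxb : x < b)
    (hint : IntervalIntegrable G' volume x b)
    (hbd : ∀ t ∈ Set.Ioc x b, |G' t| ≤ C) :
    Tendsto (fun ε : ℝ => ∫ t in (x + ε)..b, G' t) (𝓝[>] (0:ℝ))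
      (𝓝 (∫ t in x..b, G' t)) := by
  have hev : Set.Ioo (0:ℝ) (b - x) ∈ 𝓝[>] (0:ℝ) :=
    Ioo_mem_nhdsGT (by linarith)
  have key : ∀ ε ∈ Set.Ioo (0:ℝ) (b - x),
      (∫ t in (x + ε)..b, G' t) = (∫ t in x..b, G' t) - ∫ t in x..(x + ε), G' t := by
    intro ε hε
    obtain ⟨hε1, hε2⟩ := hε
    have h1 : IntervalIntegrable G' volume x (x + ε) := by
      apply hint.mono_set
      rw [Set.uIcc_of_le (by linarith : x ≤ x + ε), Set.uIcc_of_le hxb.le]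
      exact Set.Icc_subset_Icc le_rfl (by linarith)
    have h2 : IntervalIntegrable G' volume (x + ε) b := by
      apply hint.mono_set
      rw [Set.uIcc_of_le (by linarith : x + ε ≤ b), Set.uIcc_of_le hxb.le]
      exact Set.Icc_subset_Icc (by linarith) le_rfl
    have := integral_add_adjacent_intervals h1 h2
    linarith [this]
  have hsmall : Tendsto (fun ε : ℝ => ∫ t in x..(x + ε), G' t) (𝓝[>] (0:ℝ)) (𝓝 0) := by
    apply squeeze_zero_norm'
    · filter_upwards [hev] with ε hε
      obtain ⟨hε1, hε2⟩ := hε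
      have : ∀ t ∈ Set.uIoc x (x + ε), ‖G' t‖ ≤ max C 0 := by
        intro t ht
        rw [Set.uIoc_of_le (by linarith : x ≤ x + ε)] at ht
        have : t ∈ Set.Ioc x b := ⟨ht.1, le_trans ht.2 (by linarith)⟩
        exact le_trans (hbd t this) (le_max_left _ _)
      have := intervalIntegral.norm_integral_le_of_norm_le_const this
      simpa using this
    · have : Tendsto (fun ε : ℝ => max C 0 * |x + ε - x|) (𝓝 0) (𝓝 (max C 0 * |x + (0:ℝ) - x|)) := by
        apply Tendsto.const_mul
        exact (continuous_abs.comp (by continuity)).tendsto 0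
      simpa using this.mono_left nhdsWithin_le_nhds
  have : Tendsto (fun ε : ℝ => (∫ t in x..b, G' t) - ∫ t in x..(x + ε), G' t)
      (𝓝[>] (0:ℝ)) (𝓝 ((∫ t in x..b, G' t) - 0)) := tendsto_const_nhds.sub hsmall
  rw [sub_zero] at this
  apply this.congr'
  filter_upwards [hev] with ε hε
  exact (key ε hε).symm

lemma pf1_aux {g G' : ℝ → ℝ} {x b C : ℝ} (hxb : x < b)
    (hint : IntervalIntegrable G' volume x b)
    (hbd : ∀ t ∈ Set.Ioc x b, |G' t| ≤ C)
    (heq : ∀ t ∈ Set.Ioc x b, G' t = (g t - g x) / (t - x)) :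
    HasPF1Upper g x b ((∫ t in x..b, G' t) + g x * Real.log (b - x)) := by
  have hev : Set.Ioo (0:ℝ) (b - x) ∈ 𝓝[>] (0:ℝ) :=
    Ioo_mem_nhdsGT (by linarith)
  have key : ∀ ε ∈ Set.Ioo (0:ℝ) (b - x),
      (∫ t in (x + ε)..b, g t / (t - x)) + g x * Real.log ε
        = (∫ t in (x + ε)..b, G' t) + g x * Real.log (b - x) := by
    intro ε hε
    obtain ⟨hε1, hε2⟩ := hε
    have hxε : x + ε ≤ b := by linarith
    have hGint : IntervalIntegrable G' volume (x + ε) b := by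
      apply hint.mono_set
      rw [Set.uIcc_of_le hxε, Set.uIcc_of_le hxb.le]
      exact Set.Icc_subset_Icc (by linarith) le_rfl
    have hIint : IntervalIntegrable (fun t => g x * (t - x)⁻¹) volume (x + ε) b := by
      apply ContinuousOn.intervalIntegrable
      apply ContinuousOn.mul continuousOn_const
      apply ContinuousOn.inv₀ (by fun_prop)
      intro t ht
      rw [Set.uIcc_of_le hxε] at ht
      have := ht.1; intro h; nlinarith [sub_eq_zero.mp h]
    have hsplit : (∫ t in (x + ε)..b, g t / (t - x))
        = (∫ t in (x + ε)..b, G' t) + ∫ t in (x + ε)..b, g x * (t - x)⁻¹ := by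
      rw [← intervalIntegral.integral_add hGint hIint]
      apply intervalIntegral.integral_congr
      intro t ht
      rw [Set.uIcc_of_le hxε] at ht
      have htx : x < t := by linarith [ht.1]
      have h1 : t ∈ Set.Ioc x b := ⟨htx, ht.2⟩
      show g t / (t - x) = G' t + g x * (t - x)⁻¹
      rw [heq t h1]
      have : t - x ≠ 0 := by intro h; nlinarith [sub_eq_zero.mp h]
      field_simp
      ring
    have hlog : (∫ t in (x + ε)..b, g x * (t - x)⁻¹)
        = g x * (Real.log (b - x) - Real.log ε) := by
      rw [intervalIntegral.integral_const_mul]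
      have h1 : (∫ t in (x + ε)..b, (t - x)⁻¹) = ∫ u in (x + ε - x)..(b - x), u⁻¹ := by
        rw [← intervalIntegral.integral_comp_sub_right (fun u => u⁻¹) x]
      rw [h1]
      have h2 : x + ε - x = ε := by ring
      rw [h2, integral_inv]
      · rw [← Real.log_div (by linarith) (by linarith)]
      · rw [Set.uIcc_of_le (by linarith : ε ≤ b - x)]
        intro h
        exact absurd h.1 (by linarith)
    rw [hsplit, hlog]; ring
  have htail := tendsto_tail hxb hint hbd
  have : Tendsto (fun ε : ℝ => (∫ t in (x + ε)..b, G' t) + g x * Real.log (b - x))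
      (𝓝[>] (0:ℝ)) (𝓝 ((∫ t in x..b, G' t) + g x * Real.log (b - x))) :=
    htail.add tendsto_const_nhds
  apply this.congr'
  filter_upwards [hev] with ε hε
  exact (key ε hε).symm

lemma pf2_aux {g W : ℝ → ℝ} {x b d C : ℝ} (hxb : x < b)
    (hint : IntervalIntegrable W volume x b)
    (hbd : ∀ t ∈ Set.Ioc x b, |W t| ≤ C)
    (heq : ∀ t ∈ Set.Ioc x b, W t = (g t - g x - d * (t - x)) / (t - x) ^ 2) :
    HasPF2Upper g d x b
      ((∫ t in x..b, W t) + d * Real.log (b - x) - g x / (b - x)) := by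
  have hev : Set.Ioo (0:ℝ) (b - x) ∈ 𝓝[>] (0:ℝ) :=
    Ioo_mem_nhdsGT (by linarith)
  have key : ∀ ε ∈ Set.Ioo (0:ℝ) (b - x),
      (∫ t in (x + ε)..b, g t / (t - x) ^ 2) + d * Real.log ε - g x / ε
        = (∫ t in (x + ε)..b, W t) + d * Real.log (b - x) - g x / (b - x) := by
    intro ε hε
    obtain ⟨hε1, hε2⟩ := hε
    have hxε : x + ε ≤ b := by linarith
    have htne : ∀ t ∈ Set.Icc (x + ε) b, t - x ≠ 0 := by
      intro t ht h; nlinarith [sub_eq_zero.mp h, ht.1]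
    have hWint : IntervalIntegrable W volume (x + ε) b := by
      apply hint.mono_set
      rw [Set.uIcc_of_le hxε, Set.uIcc_of_le hxb.le]
      exact Set.Icc_subset_Icc (by linarith) le_rfl
    have hIint : IntervalIntegrable (fun t => d * (t - x)⁻¹) volume (x + ε) b := by
      apply ContinuousOn.intervalIntegrable
      apply ContinuousOn.mul continuousOn_const
      apply ContinuousOn.inv₀ (by fun_prop)
      intro t ht
      rw [Set.uIcc_of_le hxε] at ht
      exact htne t ht
    have hJint : IntervalIntegrable (fun t => g x * ((t - x) ^ 2)⁻¹) volume (x + ε) b := by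
      apply ContinuousOn.intervalIntegrable
      apply ContinuousOn.mul continuousOn_const
      apply ContinuousOn.inv₀ (by fun_prop)
      intro t ht
      rw [Set.uIcc_of_le hxε] at ht
      exact pow_ne_zero _ (htne t ht)
    have hsplit : (∫ t in (x + ε)..b, g t / (t - x) ^ 2)
        = (∫ t in (x + ε)..b, W t) + ((∫ t in (x + ε)..b, d * (t - x)⁻¹)
          + ∫ t in (x + ε)..b, g x * ((t - x) ^ 2)⁻¹) := by
      rw [← intervalIntegral.integral_add hIint hJint,
        ← intervalIntegral.integral_add hWint (hIint.add hJint)]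
      apply intervalIntegral.integral_congr
      intro t ht
      rw [Set.uIcc_of_le hxε] at ht
      have h1 : t ∈ Set.Ioc x b := ⟨by linarith [ht.1], ht.2⟩
      show g t / (t - x) ^ 2 = W t + (d * (t - x)⁻¹ + g x * ((t - x) ^ 2)⁻¹)
      rw [heq t h1]
      have := htne t ht
      field_simp
      ring
    have hlog : (∫ t in (x + ε)..b, d * (t - x)⁻¹)
        = d * (Real.log (b - x) - Real.log ε) := by
      rw [intervalIntegral.integral_const_mul]
      have h1 : (∫ t in (x + ε)..b, (t - x)⁻¹) = ∫ u in (x + ε - x)..(b - x), u⁻¹ := by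
        rw [← intervalIntegral.integral_comp_sub_right (fun u => u⁻¹) x]
      have h2 : x + ε - x = ε := by ring
      rw [h1, h2, integral_inv]
      · rw [← Real.log_div (by linarith) (by linarith)]
      · rw [Set.uIcc_of_le (by linarith : ε ≤ b - x)]
        intro h
        exact absurd h.1 (by linarith)
    have hsq : (∫ t in (x + ε)..b, g x * ((t - x) ^ 2)⁻¹)
        = g x * (ε⁻¹ - (b - x)⁻¹) := by
      rw [intervalIntegral.integral_const_mul]
      have h1 : (∫ t in (x + ε)..b, ((t - x) ^ 2)⁻¹)
          = ∫ u in (x + ε - x)..(b - x), (u ^ 2)⁻¹ := by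
        rw [← intervalIntegral.integral_comp_sub_right (fun u => (u ^ 2)⁻¹) x]
      have h2 : x + ε - x = ε := by ring
      rw [h1, h2]
      have h3 : (∫ u in ε..(b - x), (u ^ 2)⁻¹) = (fun u : ℝ => -u⁻¹) (b - x) - (fun u : ℝ => -u⁻¹) ε := by
        refine intervalIntegral.integral_eq_sub_of_hasDerivAt (f := fun u : ℝ => -u⁻¹) ?_ ?_
        · intro u hu
          rw [Set.uIcc_of_le (by linarith : ε ≤ b - x)] at hu
          have hu0 : u ≠ 0 := by intro h; rw [h] at hu; linarith [hu.1]
          have h := (hasDerivAt_inv hu0).neg; rw [neg_neg] at h; exact h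
        · apply ContinuousOn.intervalIntegrable
          apply ContinuousOn.inv₀ (by fun_prop)
          intro u hu
          rw [Set.uIcc_of_le (by linarith : ε ≤ b - x)] at hu
          have hu0 : u ≠ 0 := by intro h; rw [h] at hu; linarith [hu.1]
          exact pow_ne_zero _ hu0
      rw [h3]
      ring
    rw [hsplit, hlog, hsq]
    have hε0 : ε ≠ 0 := by linarith
    field_simp
    ring
  have htail := tendsto_tail hxb hint hbd
  have : Tendsto (fun ε : ℝ => (∫ t in (x + ε)..b, W t) + d * Real.log (b - x) - g x / (b - x))
      (𝓝[>] (0:ℝ))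
      (𝓝 ((∫ t in x..b, W t) + d * Real.log (b - x) - g x / (b - x))) :=
    (htail.add tendsto_const_nhds).sub tendsto_const_nhds
  apply this.congr'
  filter_upwards [hev] with ε hε
  exact (key ε hε).symm


set_option maxHeartbeats 1000000 in
/-- for `f ∈ C²([a,b]×[a,b])` all Hadamard finite parts below exist and
`x ↦ p.f.∫_x^b f(x,t)/(t−x) dt` is differentiable on `[a,b)` with
derivative `p.f.∫_x^b f(x,t)/(t−x)² dt + p.f.∫_x^b (∂f/∂x)(x,t)/(t−x) dt − (∂f/∂t)(x,x)`. -/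
theorem stmt0 (a b : ℝ) (hab : a < b) (f : ℝ → ℝ → ℝ)
    (hf : ContDiffOn ℝ 2 (fun p : ℝ × ℝ => f p.1 p.2) (Set.Icc a b ×ˢ Set.Icc a b)) :
    ∃ H : ℝ → ℝ,
      ∀ x ∈ Set.Ico a b,
        HasPF1Upper (fun t => f x t) x b (H x) ∧
        ∃ L₂ L₁ : ℝ,
          HasPF2Upper (fun t => f x t)
            (derivWithin (fun t => f x t) (Set.Icc a b) x) x b L₂ ∧
          HasPF1Upper (fun t => derivWithin (fun y => f y t) (Set.Icc a b) x) x b L₁ ∧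
          HasDerivWithinAt H
            (L₂ + L₁ - derivWithin (fun t => f x t) (Set.Icc a b) x) (Set.Ico a b) x := by
  set K : Set (ℝ × ℝ) := Set.Icc a b ×ˢ Set.Icc a b with hKdef
  have hIcc : UniqueDiffOn ℝ (Set.Icc a b) := uniqueDiffOn_Icc hab
  have hKu : UniqueDiffOn ℝ K := hIcc.prod hIcc
  have hKconv : Convex ℝ K := (convex_Icc a b).prod (convex_Icc a b)
  have hKcomp : IsCompact K := isCompact_Icc.prod isCompact_Icc
  set F : ℝ × ℝ → ℝ := fun p => f p.1 p.2 with hFdef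
  set φ : (ℝ × ℝ) → (ℝ × ℝ →L[ℝ] ℝ) := fderivWithin ℝ F K with hφdef
  have hφcd : ContDiffOn ℝ 1 φ K := hf.fderivWithin hKu (by norm_num)
  have hφdiff : DifferentiableOn ℝ φ K := hφcd.differentiableOn one_ne_zero
  have hφc : ContinuousOn φ K := hφcd.continuousOn
  have hφ'c : ContinuousOn (fderivWithin ℝ φ K) K := hφcd.continuousOn_fderivWithin hKu le_rfl
  obtain ⟨M0, hM0⟩ := hKcomp.exists_bound_of_continuousOn (f := fderivWithin ℝ φ K) hφ'c
  have hφlip : LipschitzOnWith (Real.toNNReal M0) φ K := by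
    apply hKconv.lipschitzOnWith_of_nnnorm_fderivWithin_le hφdiff
    intro p hp
    rw [← norm_toNNReal]
    exact Real.toNNReal_mono (hM0 p hp)
  set M : ℝ := (Real.toNNReal M0 : ℝ) with hMdef
  have hMnn : 0 ≤ M := (Real.toNNReal M0).coe_nonneg
  have hφd : ∀ p ∈ K, ∀ q ∈ K, ‖φ p - φ q‖ ≤ M * dist p q := by
    intro p hp q hq
    have := hφlip.dist_le_mul p hp q hq
    rwa [dist_eq_norm] at this
  set f1 : ℝ → ℝ → ℝ := fun x t => φ (x, t) (1, 0) with hf1def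
  set f2 : ℝ → ℝ → ℝ := fun x t => φ (x, t) (0, 1) with hf2def
  have hlip : ∀ v : ℝ × ℝ, ‖v‖ ≤ 1 → ∀ p ∈ K, ∀ q ∈ K,
      |φ p v - φ q v| ≤ M * max |p.1 - q.1| |p.2 - q.2| := by
    intro v hv p hp q hq
    have h1 : |φ p v - φ q v| = ‖(φ p - φ q) v‖ := by
      simp [Real.norm_eq_abs]
    rw [h1]
    calc ‖(φ p - φ q) v‖ ≤ ‖φ p - φ q‖ * ‖v‖ := ContinuousLinearMap.le_opNorm _ v
      _ ≤ (M * dist p q) * 1 :=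
          mul_le_mul (hφd p hp q hq) hv (norm_nonneg v) (by positivity)
      _ = M * max |p.1 - q.1| |p.2 - q.2| := by
          rw [mul_one, Prod.dist_eq, Real.dist_eq, Real.dist_eq]
  have hFd : ∀ p ∈ K, HasFDerivWithinAt F (φ p) K p := fun p hp =>
    ((hf.differentiableOn (by norm_num)) p hp).hasFDerivWithinAt
  -- partial derivatives as derivatives of slices
  have hD2 : ∀ x ∈ Set.Icc a b, ∀ t ∈ Set.Icc a b,
      HasDerivWithinAt (fun s => f x s) (f2 x t) (Set.Icc a b) t := by
    intro x hx t ht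
    have hin : HasDerivWithinAt (fun s : ℝ => ((x, s) : ℝ × ℝ)) ((0 : ℝ), (1 : ℝ))
        (Set.Icc a b) t := HasDerivWithinAt.prodMk (hasDerivWithinAt_const t _ x) (hasDerivWithinAt_id t _)
    exact (hFd (x, t) ⟨hx, ht⟩).comp_hasDerivWithinAt_of_eq t hin (fun s hs => ⟨hx, hs⟩) rfl
  have hD1 : ∀ x ∈ Set.Icc a b, ∀ t ∈ Set.Icc a b,
      HasDerivWithinAt (fun y => f y t) (f1 x t) (Set.Icc a b) x := by
    intro x hx t ht
    have hin : HasDerivWithinAt (fun y : ℝ => ((y, t) : ℝ × ℝ)) ((1 : ℝ), (0 : ℝ))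
        (Set.Icc a b) x := HasDerivWithinAt.prodMk (hasDerivWithinAt_id x _) (hasDerivWithinAt_const x _ t)
    exact (hFd (x, t) ⟨hx, ht⟩).comp_hasDerivWithinAt_of_eq x hin (fun y hy => ⟨hy, ht⟩) rfl
  have hDdiag : ∀ x ∈ Set.Icc a b,
      HasDerivWithinAt (fun y => f y y) (f1 x x + f2 x x) (Set.Icc a b) x := by
    intro x hx
    have hin : HasDerivWithinAt (fun y : ℝ => ((y, y) : ℝ × ℝ)) ((1 : ℝ), (1 : ℝ))
        (Set.Icc a b) x := HasDerivWithinAt.prodMk (hasDerivWithinAt_id x _) (hasDerivWithinAt_id x _)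
    have := (hFd (x, x) ⟨hx, hx⟩).comp_hasDerivWithinAt_of_eq x hin (fun y hy => ⟨hy, hy⟩) rfl
    have hv : ((1 : ℝ), (1 : ℝ)) = ((1 : ℝ), (0 : ℝ)) + ((0 : ℝ), (1 : ℝ)) := by
      simp [Prod.ext_iff]
    rw [hv, map_add] at this
    exact this
  have hf2c : ∀ x ∈ Set.Icc a b, ContinuousOn (fun t => f2 x t) (Set.Icc a b) := by
    intro x hx
    have h1 : ContinuousOn (fun t : ℝ => φ (x, t)) (Set.Icc a b) :=
      hφc.comp (Continuous.continuousOn (continuous_const.prodMk continuous_id))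
        (fun t ht => ⟨hx, ht⟩)
    exact h1.clm_apply continuousOn_const
  have hf1c : ∀ x ∈ Set.Icc a b, ContinuousOn (fun t => f1 x t) (Set.Icc a b) := by
    intro x hx
    have h1 : ContinuousOn (fun t : ℝ => φ (x, t)) (Set.Icc a b) :=
      hφc.comp (Continuous.continuousOn (continuous_const.prodMk continuous_id))
        (fun t ht => ⟨hx, ht⟩)
    exact h1.clm_apply continuousOn_const
  have hFc : ContinuousOn F K := hf.continuousOn
  have hfxc : ∀ x ∈ Set.Icc a b, ContinuousOn (fun t => f x t) (Set.Icc a b) := by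
    intro x hx
    exact hFc.comp (Continuous.continuousOn (continuous_const.prodMk continuous_id)) (fun t ht => ⟨hx, ht⟩)
  have hseg : ∀ x ∈ Set.Icc a b, ∀ t ∈ Set.Icc a b, ∀ s ∈ Set.Icc (0:ℝ) 1,
      x + s * (t - x) ∈ Set.Icc a b := by
    intro x hx t ht s hs
    have h1 : 0 ≤ (1 - s) * (x - a) := mul_nonneg (by linarith [hs.2]) (by linarith [hx.1])
    have h2 : 0 ≤ s * (t - a) := mul_nonneg hs.1 (by linarith [ht.1])
    have h3 : 0 ≤ (1 - s) * (b - x) := mul_nonneg (by linarith [hs.2]) (by linarith [hx.2])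
    have h4 : 0 ≤ s * (b - t) := mul_nonneg hs.1 (by linarith [ht.2])
    constructor
    · nlinarith
    · nlinarith
  set G : ℝ → ℝ → ℝ := fun x t => ∫ s in (0:ℝ)..1, f2 x (x + s * (t - x)) with hGdef
  have hGint0 : ∀ x ∈ Set.Icc a b, ∀ t ∈ Set.Icc a b,
      IntervalIntegrable (fun s => f2 x (x + s * (t - x))) volume 0 1 := by
    intro x hx t ht
    apply ContinuousOn.intervalIntegrable
    rw [Set.uIcc_of_le zero_le_one]
    exact (hf2c x hx).comp (by fun_prop) (fun s hs => hseg x hx t ht s hs)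
  have hGlipx : ∀ x ∈ Set.Icc a b, ∀ y ∈ Set.Icc a b, ∀ t ∈ Set.Icc a b,
      |G y t - G x t| ≤ M * |y - x| := by
    intro x hx y hy t ht
    have h1 : G y t - G x t
        = ∫ s in (0:ℝ)..1, (f2 y (y + s * (t - y)) - f2 x (x + s * (t - x))) :=
      (intervalIntegral.integral_sub (hGint0 y hy t ht) (hGint0 x hx t ht)).symm
    rw [h1]
    have h2 : ∀ s ∈ Set.uIoc (0:ℝ) 1,
        ‖f2 y (y + s * (t - y)) - f2 x (x + s * (t - x))‖ ≤ M * |y - x| := by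
      intro s hs
      rw [Set.uIoc_of_le zero_le_one] at hs
      have hs' : s ∈ Set.Icc (0:ℝ) 1 := ⟨hs.1.le, hs.2⟩
      have hp : ((y, y + s * (t - y)) : ℝ × ℝ) ∈ K := ⟨hy, hseg y hy t ht s hs'⟩
      have hq : ((x, x + s * (t - x)) : ℝ × ℝ) ∈ K := ⟨hx, hseg x hx t ht s hs'⟩
      have := hlip ((0 : ℝ), (1 : ℝ)) (by rw [Prod.norm_def]; norm_num) _ hp _ hq
      rw [Real.norm_eq_abs]
      refine le_trans this ?_
      apply mul_le_mul_of_nonneg_left _ hMnn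
      apply max_le le_rfl
      have : (y + s * (t - y)) - (x + s * (t - x)) = (1 - s) * (y - x) := by ring
      rw [this, abs_mul]
      calc |1 - s| * |y - x| ≤ 1 * |y - x| := by
            apply mul_le_mul_of_nonneg_right _ (abs_nonneg _)
            rw [abs_le]; constructor <;> linarith [hs'.1, hs'.2]
        _ = |y - x| := one_mul _
    calc ‖∫ s in (0:ℝ)..1, (f2 y (y + s * (t - y)) - f2 x (x + s * (t - x)))‖
        ≤ M * |y - x| * |1 - 0| := intervalIntegral.norm_integral_le_of_norm_le_const h2
      _ = M * |y - x| := by norm_num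
  have hGlipt : ∀ x ∈ Set.Icc a b, ∀ t ∈ Set.Icc a b, ∀ t' ∈ Set.Icc a b,
      |G x t' - G x t| ≤ M * |t' - t| := by
    intro x hx t ht t' ht'
    have h1 : G x t' - G x t
        = ∫ s in (0:ℝ)..1, (f2 x (x + s * (t' - x)) - f2 x (x + s * (t - x))) :=
      (intervalIntegral.integral_sub (hGint0 x hx t' ht') (hGint0 x hx t ht)).symm
    rw [h1]
    have h2 : ∀ s ∈ Set.uIoc (0:ℝ) 1,
        ‖f2 x (x + s * (t' - x)) - f2 x (x + s * (t - x))‖ ≤ M * |t' - t| := by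
      intro s hs
      rw [Set.uIoc_of_le zero_le_one] at hs
      have hs' : s ∈ Set.Icc (0:ℝ) 1 := ⟨hs.1.le, hs.2⟩
      have hp : ((x, x + s * (t' - x)) : ℝ × ℝ) ∈ K := ⟨hx, hseg x hx t' ht' s hs'⟩
      have hq : ((x, x + s * (t - x)) : ℝ × ℝ) ∈ K := ⟨hx, hseg x hx t ht s hs'⟩
      have := hlip ((0 : ℝ), (1 : ℝ)) (by rw [Prod.norm_def]; norm_num) _ hp _ hq
      rw [Real.norm_eq_abs]
      refine le_trans this ?_
      apply mul_le_mul_of_nonneg_left _ hMnn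
      apply max_le (by simp [abs_nonneg])
      have : (x + s * (t' - x)) - (x + s * (t - x)) = s * (t' - t) := by ring
      rw [this, abs_mul]
      calc |s| * |t' - t| ≤ 1 * |t' - t| := by
            apply mul_le_mul_of_nonneg_right _ (abs_nonneg _)
            rw [abs_le]; constructor <;> linarith [hs'.1, hs'.2]
        _ = |t' - t| := one_mul _
    calc ‖∫ s in (0:ℝ)..1, (f2 x (x + s * (t' - x)) - f2 x (x + s * (t - x)))‖
        ≤ M * |t' - t| * |1 - 0| := intervalIntegral.norm_integral_le_of_norm_le_const h2
      _ = M * |t' - t| := by norm_num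
  have hGdiag : ∀ x : ℝ, G x x = f2 x x := by
    intro x
    simp [hGdef]
  have hGcont : ∀ y ∈ Set.Icc a b, ContinuousOn (fun t => G y t) (Set.Icc a b) := by
    intro y hy
    have : LipschitzOnWith (Real.toNNReal M0) (fun t => G y t) (Set.Icc a b) := by
      apply LipschitzOnWith.of_dist_le_mul
      intro t ht t' ht'
      rw [Real.dist_eq, Real.dist_eq]
      exact hGlipt y hy t' ht' t ht
    exact this.continuousOn
  have hGrep : ∀ x ∈ Set.Icc a b, ∀ t ∈ Set.Icc a b, t ≠ x →
      G x t = (f x t - f x x) / (t - x) := by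
    intro x hx t ht htx
    have hc : t - x ≠ 0 := sub_ne_zero.2 htx
    have hsub : Set.uIcc x t ⊆ Set.Icc a b := Set.uIcc_subset_Icc hx ht
    have hftc : (∫ s in x..t, f2 x s) = f x t - f x x := by
      apply intervalIntegral.integral_eq_sub_of_hasDeriv_right
      · exact (hfxc x hx).mono hsub
      · intro u hu
        have hu1 : a < u := lt_of_le_of_lt (le_min hx.1 ht.1) hu.1
        have hu2 : u < b := lt_of_lt_of_le hu.2 (max_le hx.2 ht.2)
        exact ((hD2 x hx u ⟨hu1.le, hu2.le⟩).hasDerivAt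
          (Icc_mem_nhds hu1 hu2)).hasDerivWithinAt
      · exact ((hf2c x hx).mono hsub).intervalIntegrable
    have hcv := intervalIntegral.integral_comp_mul_add (a := (0:ℝ)) (b := (1:ℝ))
      (fun s => f2 x s) hc x
    have h0 : (t - x) * 0 + x = x := by ring
    have h1 : (t - x) * 1 + x = t := by ring
    rw [h0, h1] at hcv
    have h2 : G x t = ∫ s in (0:ℝ)..1, f2 x ((t - x) * s + x) := by
      apply intervalIntegral.integral_congr
      intro s _
      congr 1
      ring
    rw [h2, hcv, hftc, smul_eq_mul, div_eq_inv_mul]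
  -- pointwise derivative of G in the first variable
  have hGd : ∀ x ∈ Set.Ico a b, ∀ t ∈ Set.Ioc x b,
      HasDerivWithinAt (fun y => G y t)
        ((f1 x t - f1 x x) / (t - x) + (G x t - f2 x x) / (t - x)) (Set.Icc a b) x := by
    intro x hx t ht
    have hxI : x ∈ Set.Icc a b := ⟨hx.1, hx.2.le⟩
    have htI : t ∈ Set.Icc a b := ⟨le_trans hx.1 ht.1.le, ht.2⟩
    have htx : t - x ≠ 0 := sub_ne_zero.2 ht.1.ne'
    have hN : HasDerivWithinAt (fun y => f y t - f y y)
        (f1 x t - (f1 x x + f2 x x)) (Set.Icc a b) x := (hD1 x hxI t htI).sub (hDdiag x hxI)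
    have hIdv : HasDerivWithinAt (fun y : ℝ => (t - y)⁻¹) (-(-1) / (t - x) ^ 2)
        (Set.Icc a b) x := by
      have h1 : HasDerivWithinAt (fun y : ℝ => t - y) (-1) (Set.Icc a b) x := by
        simpa using (hasDerivWithinAt_id x (Set.Icc a b)).const_sub t
      exact h1.inv htx
    have hq := hN.mul hIdv
    have hval : (f1 x t - f1 x x) / (t - x) + (G x t - f2 x x) / (t - x)
        = (f1 x t - (f1 x x + f2 x x)) * (t - x)⁻¹
          + (f x t - f x x) * (-(-1) / (t - x) ^ 2) := by
      rw [hGrep x hxI t htI ht.1.ne']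
      field_simp
      ring
    rw [hval]
    apply hq.congr_of_eventuallyEq
    · filter_upwards [self_mem_nhdsWithin,
        nhdsWithin_le_nhds (Iio_mem_nhds ht.1)] with y hy hyt
      rw [hGrep y hy t htI (ne_of_lt hyt).symm, div_eq_mul_inv]; rfl
    · rw [hGrep x hxI t htI ht.1.ne', div_eq_mul_inv]; rfl
  -- the function H
  refine ⟨fun x => (∫ t in x..b, G x t) + f x x * Real.log (b - x), ?_⟩
  intro x hx
  have hxI : x ∈ Set.Icc a b := ⟨hx.1, hx.2.le⟩
  have hxb : x < b := hx.2
  have hIocIcc : Set.Ioc x b ⊆ Set.Icc a b := fun t ht => ⟨le_trans hx.1 ht.1.le, ht.2⟩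
  have hd2 : derivWithin (fun t => f x t) (Set.Icc a b) x = f2 x x :=
    (hD2 x hxI x hxI).derivWithin (hIcc x hxI)
  have hd1 : ∀ t ∈ Set.Icc a b, derivWithin (fun y => f y t) (Set.Icc a b) x = f1 x t :=
    fun t ht => (hD1 x hxI t ht).derivWithin (hIcc x hxI)
  -- bound for G x on [a,b]
  have hGbd : ∀ t ∈ Set.Ioc x b, |G x t| ≤ |f2 x x| + M * (b - a) := by
    intro t ht
    have htI := hIocIcc ht
    have h1 := hGlipt x hxI x hxI t htI
    have h2 : |t - x| ≤ b - a := by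
      rw [abs_le]; constructor <;> [linarith [htI.1, hxI.2]; linarith [htI.2, hxI.1]]
    calc |G x t| = |f2 x x + (G x t - G x x)| := by rw [hGdiag x]; ring_nf
      _ ≤ |f2 x x| + |G x t - G x x| := abs_add_le _ _
      _ ≤ |f2 x x| + M * (b - a) := by
          have := le_trans h1 (mul_le_mul_of_nonneg_left h2 hMnn)
          linarith
  have hGxint : IntervalIntegrable (fun t => G x t) volume x b :=
    ((hGcont x hxI).mono (Set.uIcc_subset_Icc hxI ⟨hab.le, le_rfl⟩)).intervalIntegrable
  -- auxiliary functions Q and W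
  set Q : ℝ → ℝ := fun t => (f1 x t - f1 x x) / (t - x) with hQdef
  set W : ℝ → ℝ := fun t => (G x t - f2 x x) / (t - x) with hWdef
  have htxpos : ∀ t ∈ Set.Ioc x b, 0 < t - x := fun t ht => sub_pos.2 ht.1
  have hQbd : ∀ t ∈ Set.Ioc x b, |Q t| ≤ M := by
    intro t ht
    have htI := hIocIcc ht
    have h1 := hlip ((1 : ℝ), (0 : ℝ)) (by rw [Prod.norm_def]; norm_num)
      ((x, t) : ℝ × ℝ) ⟨hxI, htI⟩ ((x, x) : ℝ × ℝ) ⟨hxI, hxI⟩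
    simp only [sub_self, abs_zero] at h1
    have h2 : max (0:ℝ) |t - x| = |t - x| := max_eq_right (abs_nonneg _)
    rw [h2] at h1
    rw [hQdef]
    simp only []
    rw [abs_div, div_le_iff₀ (abs_pos.2 (htxpos t ht).ne')]
    exact h1
  have hWbd : ∀ t ∈ Set.Ioc x b, |W t| ≤ M := by
    intro t ht
    have htI := hIocIcc ht
    have h1 : |G x t - f2 x x| ≤ M * |t - x| := by
      rw [← hGdiag x]
      exact hGlipt x hxI x hxI t htI
    rw [hWdef]
    simp only []
    rw [abs_div, div_le_iff₀ (abs_pos.2 (htxpos t ht).ne')]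
    exact h1
  have hne : ∀ t ∈ Set.Ioc x b, t - x ≠ 0 := fun t ht => (htxpos t ht).ne'
  have hQcont : ContinuousOn Q (Set.Ioc x b) := by
    apply ContinuousOn.div
    · exact ((hf1c x hxI).mono hIocIcc).sub continuousOn_const
    · fun_prop
    · exact hne
  have hWcont : ContinuousOn W (Set.Ioc x b) := by
    apply ContinuousOn.div
    · exact ((hGcont x hxI).mono hIocIcc).sub continuousOn_const
    · fun_prop
    · exact hne
  have hQint : IntervalIntegrable Q volume x b := intInt_of_bdd hxb.le hQcont hQbd
  have hWint : IntervalIntegrable W volume x b := intInt_of_bdd hxb.le hWcont hWbd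
  have hQeq : ∀ t ∈ Set.Ioc x b, Q t = (f1 x t - f1 x x) / (t - x) := fun t _ => rfl
  have hWeq : ∀ t ∈ Set.Ioc x b,
      W t = (f x t - f x x - f2 x x * (t - x)) / (t - x) ^ 2 := by
    intro t ht
    rw [hWdef]
    simp only []
    rw [hGrep x hxI t (hIocIcc ht) ht.1.ne']
    have := hne t ht
    field_simp
  -- PF1 for f x ·
  have hpf1 : HasPF1Upper (fun t => f x t) x b
      ((∫ t in x..b, G x t) + f x x * Real.log (b - x)) := by
    apply pf1_aux hxb hGxint hGbd
    intro t ht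
    exact hGrep x hxI t (hIocIcc ht) ht.1.ne'
  refine ⟨hpf1, ((∫ t in x..b, W t) + f2 x x * Real.log (b - x) - f x x / (b - x)),
    ((∫ t in x..b, Q t) + f1 x x * Real.log (b - x)), ?_, ?_, ?_⟩
  · rw [hd2]
    exact pf2_aux hxb hWint hWbd hWeq
  · have hpf1' : HasPF1Upper (fun t => f1 x t) x b
        ((∫ t in x..b, Q t) + f1 x x * Real.log (b - x)) := pf1_aux hxb hQint hQbd hQeq
    have hev : Set.Ioo (0:ℝ) (b - x) ∈ 𝓝[>] (0:ℝ) := Ioo_mem_nhdsGT (by linarith)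
    refine Filter.Tendsto.congr' ?_ hpf1'
    filter_upwards [hev] with ε hε
    obtain ⟨hε1, hε2⟩ := hε
    have h1 : (∫ t in (x+ε)..b, f1 x t / (t - x))
        = ∫ t in (x+ε)..b, (derivWithin (fun y => f y t) (Set.Icc a b) x) / (t - x) := by
      apply intervalIntegral.integral_congr
      intro t ht
      rw [Set.uIcc_of_le (by linarith)] at ht
      show f1 x t / (t - x) = derivWithin (fun y => f y t) (Set.Icc a b) x / (t - x)
      rw [hd1 t ⟨by linarith [ht.1, hx.1], ht.2⟩]
    have h2 := hd1 x hxI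
    rw [h1, h2]
  -- the derivative
  · have hB : Tendsto (fun y => (∫ t in x..y, G y t) / (y - x))
        (𝓝[Set.Ico a b \ {x}] x) (𝓝 (f2 x x)) := by
      rw [tendsto_iff_dist_tendsto_zero]
      apply squeeze_zero' (g := fun y => M * |y - x| + M * |y - x|)
      · filter_upwards with y
        exact dist_nonneg
      · filter_upwards [self_mem_nhdsWithin] with y hy
        obtain ⟨hy', hyx⟩ := hy
        have hyI : y ∈ Set.Icc a b := ⟨hy'.1, hy'.2.le⟩
        have hyx' : y - x ≠ 0 := sub_ne_zero.2 hyx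
        have hGyint : IntervalIntegrable (fun t => G y t) volume x y :=
          ((hGcont y hyI).mono (Set.uIcc_subset_Icc hxI hyI)).intervalIntegrable
        have hkey : (∫ t in x..y, G y t) - (y - x) * f2 x x
            = ∫ t in x..y, (G y t - f2 x x) := by
          rw [intervalIntegral.integral_sub hGyint intervalIntegrable_const,
            intervalIntegral.integral_const, smul_eq_mul]
        have hbd2 : ∀ t ∈ Set.uIoc x y, ‖G y t - f2 x x‖ ≤ M * |y - x| + M * |y - x| := by
          intro t htm
          have ht1 : t ∈ Set.Icc a b := by
            rcases le_total x y with h | h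
            · rw [Set.uIoc_of_le h] at htm
              exact ⟨le_trans hxI.1 htm.1.le, le_trans htm.2 hyI.2⟩
            · rw [Set.uIoc_of_ge h] at htm
              exact ⟨le_trans hyI.1 htm.1.le, le_trans htm.2 hxI.2⟩
          have htx2 : |t - x| ≤ |y - x| := by
            rcases le_total x y with h | h
            · rw [Set.uIoc_of_le h] at htm
              rw [abs_of_nonneg (by linarith [htm.1.le] : (0:ℝ) ≤ t - x),
                abs_of_nonneg (by linarith : (0:ℝ) ≤ y - x)]
              linarith [htm.2]
            · rw [Set.uIoc_of_ge h] at htm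
              rw [abs_of_nonpos (by linarith [htm.2] : t - x ≤ 0),
                abs_of_nonpos (by linarith : y - x ≤ 0)]
              linarith [htm.1]
          have e1 : |G y t - G x t| ≤ M * |y - x| := hGlipx x hxI y hyI t ht1
          have e2 : |G x t - G x x| ≤ M * |t - x| := hGlipt x hxI x hxI t ht1
          have e2' : |G x t - G x x| ≤ M * |y - x| :=
            le_trans e2 (mul_le_mul_of_nonneg_left htx2 hMnn)
          rw [Real.norm_eq_abs, ← hGdiag x]
          calc |G y t - G x x| = |(G y t - G x t) + (G x t - G x x)| := by ring_nf
            _ ≤ |G y t - G x t| + |G x t - G x x| := abs_add_le _ _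
            _ ≤ M * |y - x| + M * |y - x| := add_le_add e1 e2'
        have hnorm : ‖∫ t in x..y, (G y t - f2 x x)‖
            ≤ (M * |y - x| + M * |y - x|) * |y - x| :=
          intervalIntegral.norm_integral_le_of_norm_le_const hbd2
        have he : (∫ t in x..y, G y t) / (y - x) - f2 x x
            = (∫ t in x..y, (G y t - f2 x x)) / (y - x) := by
          rw [← hkey]
          field_simp
        rw [Real.dist_eq, he, abs_div, div_le_iff₀ (abs_pos.2 hyx')]
        simpa [Real.norm_eq_abs] using hnorm
      · have h0 : Tendsto (fun y : ℝ => M * |y - x| + M * |y - x|) (𝓝 x)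
            (𝓝 (M * |x - x| + M * |x - x|)) := by
          apply Tendsto.add <;> exact (tendsto_const_nhds.mul
            ((continuous_abs.comp (continuous_id.sub continuous_const)).tendsto x))
        simp only [sub_self, abs_zero, mul_zero, add_zero] at h0
        exact h0.mono_left nhdsWithin_le_nhds
    have hA : Tendsto (fun y => (∫ t in x..b, (G y t - G x t)) / (y - x))
        (𝓝[Set.Ico a b \ {x}] x) (𝓝 (∫ t in x..b, (Q t + W t))) := by
      have hrw : ∀ y : ℝ, (∫ t in x..b, (G y t - G x t)) / (y - x)
          = ∫ t in Set.Ioc x b, ((G y t - G x t) / (y - x)) ∂volume := by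
        intro y
        rw [← intervalIntegral.integral_div, intervalIntegral.integral_of_le hxb.le]
      have hrwt : (∫ t in x..b, (Q t + W t)) = ∫ t in Set.Ioc x b, (Q t + W t) ∂volume :=
        intervalIntegral.integral_of_le hxb.le
      rw [hrwt]
      refine Tendsto.congr (fun y => (hrw y).symm) ?_
      apply MeasureTheory.tendsto_integral_filter_of_dominated_convergence (fun _ => M)
      · filter_upwards [self_mem_nhdsWithin] with y hy
        obtain ⟨hy', hyx⟩ := hy
        have hyI : y ∈ Set.Icc a b := ⟨hy'.1, hy'.2.le⟩
        apply ContinuousOn.aestronglyMeasurable _ measurableSet_Ioc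
        exact (((hGcont y hyI).mono hIocIcc).sub ((hGcont x hxI).mono hIocIcc)).div_const _
      · filter_upwards [self_mem_nhdsWithin] with y hy
        obtain ⟨hy', hyx⟩ := hy
        have hyI : y ∈ Set.Icc a b := ⟨hy'.1, hy'.2.le⟩
        have hyx' : y - x ≠ 0 := sub_ne_zero.2 hyx
        rw [ae_restrict_iff' measurableSet_Ioc]
        filter_upwards with t ht
        have h1 := hGlipx x hxI y hyI t (hIocIcc ht)
        rw [Real.norm_eq_abs, abs_div, div_le_iff₀ (abs_pos.2 hyx')]
        exact h1
      · exact integrableOn_const measure_Ioc_lt_top.ne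
      · rw [ae_restrict_iff' measurableSet_Ioc]
        filter_upwards with t
        intro htmem
        have hder := hGd x hx t htmem
        have hslope := hasDerivWithinAt_iff_tendsto_slope.1 hder
        have hmono : 𝓝[Set.Ico a b \ {x}] x ≤ 𝓝[Set.Icc a b \ {x}] x :=
          nhdsWithin_mono _ (fun y hy => ⟨Set.Ico_subset_Icc_self hy.1, hy.2⟩)
        refine Tendsto.congr ?_ (hslope.mono_left hmono)
        intro y
        rw [slope_def_field]
    have hΦ : HasDerivWithinAt (fun y => ∫ t in y..b, G y t)
        ((∫ t in x..b, (Q t + W t)) - f2 x x) (Set.Ico a b) x := by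
      rw [hasDerivWithinAt_iff_tendsto_slope]
      refine Tendsto.congr' ?_ (hA.sub hB)
      filter_upwards [self_mem_nhdsWithin] with y hy
      obtain ⟨hy', hyx⟩ := hy
      have hyI : y ∈ Set.Icc a b := ⟨hy'.1, hy'.2.le⟩
      have habI : b ∈ Set.Icc a b := ⟨hab.le, le_rfl⟩
      have h1 : IntervalIntegrable (fun t => G y t) volume x y :=
        ((hGcont y hyI).mono (Set.uIcc_subset_Icc hxI hyI)).intervalIntegrable
      have h2 : IntervalIntegrable (fun t => G y t) volume y b :=
        ((hGcont y hyI).mono (Set.uIcc_subset_Icc hyI habI)).intervalIntegrable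
      have h3 : IntervalIntegrable (fun t => G y t) volume x b :=
        ((hGcont y hyI).mono (Set.uIcc_subset_Icc hxI habI)).intervalIntegrable
      have hadd := intervalIntegral.integral_add_adjacent_intervals h1 h2
      have hsub := intervalIntegral.integral_sub h3 hGxint
      rw [slope_def_field, ← sub_div]
      congr 1
      linarith [hadd, hsub]
    have hψ : HasDerivWithinAt (fun y => f y y * Real.log (b - y))
        ((f1 x x + f2 x x) * Real.log (b - x) + f x x * (-1 / (b - x)))
        (Set.Ico a b) x := by
      apply HasDerivWithinAt.mul ((hDdiag x hxI).mono Set.Ico_subset_Icc_self)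
      have h1 : HasDerivAt (fun y : ℝ => b - y) (-1) x := by
        simpa using (hasDerivAt_id x).const_sub b
      have h2 : HasDerivAt (fun y : ℝ => Real.log (b - y)) (-1 / (b - x)) x :=
        h1.log (by intro h; rw [sub_eq_zero] at h; exact absurd h.symm hxb.ne)
      exact h2.hasDerivWithinAt
    have hH := hΦ.add hψ
    rw [hd2]
    have hval : (∫ t in x..b, (Q t + W t)) - f2 x x
          + ((f1 x x + f2 x x) * Real.log (b - x) + f x x * (-1 / (b - x)))
        = (∫ t in x..b, W t) + f2 x x * Real.log (b - x) - f x x / (b - x)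
          + ((∫ t in x..b, Q t) + f1 x x * Real.log (b - x)) - f2 x x := by
      rw [intervalIntegral.integral_add hQint hWint]
      ring
    rw [← hval]
    exact hH
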